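/- Let A = [[A_ff, A_fc],[A_cf, A_cc]] be an invertible matrix on F ⊕ C with A_ff invertible, let P = [[W],[I]] and R = [Z, I], set δ_P = A_ff·W + A_fc, δ_R = Z·A_ff + A_cf, K = R·A·P. Suppose Rᵀ satisfies the weak approximation property with respect to A·Aᵀ with constant C_R, set C_Z = sqrt(C_R·(1 + ‖Z‖²)/‖A·Aᵀ‖), and assume C_Z·‖δ_P‖ < 1 (so K is invertible). Then for every F×F matrix Δ_F, with δ_F = I − Δ_F·A_ff, δ̂_F = I − A_ff·Δ_F, G = δ_F + Δ_F·δ_P·K⁻¹·δ_R, and G_pre = δ̂_F + δ_P·K⁻¹·δ_R·Δ_F, one has ‖G‖ ≤ ‖δ_F‖ + ‖Δ_F‖·‖A_ff‖·C_Z·‖δ_P‖/(1 − C_Z·‖δ_P‖) and ‖G_pre‖ ≤ ‖δ̂_F‖ + (1 + ‖δ̂_F‖)·C_Z·‖δ_P‖/(1 − C_Z·‖δ_P‖). -/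

import Mathlib

open Matrix
open scoped Matrix.Norms.L2Operator

/-- The Euclidean (ℓ²) norm of a finitely-supported real vector. -/
noncomputable def euclNorm {ι : Type*} [Fintype ι] (v : ι → ℝ) : ℝ :=
  ‖(WithLp.equiv 2 (ι → ℝ)).symm v‖

namespace WAPAux

variable {ι κ : Type*} [Fintype ι] [Fintype κ]

lemma euclNorm_nonneg (v : ι → ℝ) : 0 ≤ euclNorm v := norm_nonneg _

lemma euclNorm_sq (v : ι → ℝ) : euclNorm v ^ 2 = ∑ i, v i ^ 2 := by
  rw [euclNorm, EuclideanSpace.norm_eq, Real.sq_sqrt (by positivity)]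
  simp [sq_abs]

lemma euclNorm_sum_elim (a : ι → ℝ) (b : κ → ℝ) :
    euclNorm (Sum.elim a b) ^ 2 = euclNorm a ^ 2 + euclNorm b ^ 2 := by
  simp [euclNorm_sq, Fintype.sum_sum_type]

lemma euclNorm_sub_le (u w : ι → ℝ) : euclNorm (u - w) ≤ euclNorm u + euclNorm w := by
  simpa [euclNorm] using
    norm_sub_le ((WithLp.equiv 2 (ι → ℝ)).symm u) ((WithLp.equiv 2 (ι → ℝ)).symm w)

lemma euclNorm_mulVec_le [DecidableEq κ] (M : Matrix ι κ ℝ) (x : κ → ℝ) :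
    euclNorm (M *ᵥ x) ≤ ‖M‖ * euclNorm x :=
  M.l2_opNorm_mulVec ((WithLp.equiv 2 (κ → ℝ)).symm x)

lemma l2_opNorm_le_of_mulVec [DecidableEq κ] {M : Matrix ι κ ℝ} {c : ℝ} (hc : 0 ≤ c)
    (h : ∀ x : κ → ℝ, euclNorm (M *ᵥ x) ≤ c * euclNorm x) : ‖M‖ ≤ c := by
  rw [Matrix.l2_opNorm_def]
  refine ContinuousLinearMap.opNorm_le_bound _ hc fun x => ?_
  simpa [euclNorm, Matrix.toEuclideanLin_apply] using h ((WithLp.equiv 2 (κ → ℝ)) x)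

lemma l2_opNorm_transpose [DecidableEq ι] [DecidableEq κ] (M : Matrix ι κ ℝ) : ‖Mᵀ‖ = ‖M‖ := by
  rw [← Matrix.conjTranspose_eq_transpose_of_trivial, Matrix.l2_opNorm_conjTranspose]

lemma norm_one_le [DecidableEq ι] : ‖(1 : Matrix ι ι ℝ)‖ ≤ 1 :=
  l2_opNorm_le_of_mulVec zero_le_one (fun x => by rw [Matrix.one_mulVec, one_mul])

lemma one_add_inv_bound [DecidableEq ι] (E : Matrix ι ι ℝ) (hE : ‖E‖ < 1) :
    IsUnit (1 + E) ∧ ‖(1 + E)⁻¹‖ ≤ 1 / (1 - ‖E‖) := by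
  have h1 : IsUnit (1 + E) := by
    have := isUnit_one_sub_of_norm_lt_one (x := -E) (by simpa using hE)
    simpa [sub_neg_eq_add] using this
  have hdet : IsUnit (1 + E).det := (Matrix.isUnit_iff_isUnit_det _).mp h1
  have hinv : (1 + E)⁻¹ = 1 - E * (1 + E)⁻¹ := by
    have h2 : (1 + E) * (1 + E)⁻¹ = 1 := Matrix.mul_nonsing_inv _ hdet
    rw [add_mul, one_mul] at h2
    linear_combination (norm := abel) h2
  refine ⟨h1, ?_⟩
  have h3 : ‖(1 + E)⁻¹‖ ≤ 1 + ‖E‖ * ‖(1 + E)⁻¹‖ := by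
    calc ‖(1 + E)⁻¹‖ = ‖1 - E * (1 + E)⁻¹‖ := by rw [← hinv]
      _ ≤ ‖(1 : Matrix ι ι ℝ)‖ + ‖E * (1 + E)⁻¹‖ := norm_sub_le _ _
      _ ≤ 1 + ‖E‖ * ‖(1 + E)⁻¹‖ := add_le_add norm_one_le (Matrix.l2_opNorm_mul _ _)
  have h4 : (0:ℝ) ≤ ‖(1 + E)⁻¹‖ := norm_nonneg _
  rw [le_div_iff₀ (by linarith)]
  nlinarith

end WAPAux


set_option maxHeartbeats 2000000 in
/-- **Theorem 3.5.** If `Rᵀ` satisfies the WAP with respect to `A·Aᵀ` with constant `C_R` and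
`C_Z·‖δ_P‖ < 1`, then for any `Δ_F`,
`‖G‖ ≤ ‖δ_F‖ + ‖Δ_F‖·‖A_ff‖·C_Z‖δ_P‖/(1 − C_Z‖δ_P‖)` and
`‖G_pre‖ ≤ ‖δ̂_F‖ + (1 + ‖δ̂_F‖)·C_Z‖δ_P‖/(1 − C_Z‖δ_P‖)`. -/
theorem wap_on_R_G_bounds
    {F C : Type*} [Fintype F] [Fintype C] [DecidableEq F] [DecidableEq C]
    (Aff : Matrix F F ℝ) (Afc : Matrix F C ℝ) (Acf : Matrix C F ℝ) (Acc : Matrix C C ℝ)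
    (W : Matrix F C ℝ) (Z : Matrix C F ℝ)
    (A : Matrix (F ⊕ C) (F ⊕ C) ℝ) (hA : A = fromBlocks Aff Afc Acf Acc)
    (hAinv : IsUnit A) (hAff : IsUnit Aff)
    (P : Matrix (F ⊕ C) C ℝ) (hP : P = fromRows W 1)
    (R : Matrix C (F ⊕ C) ℝ) (hR : R = fromCols Z 1)
    (K : Matrix C C ℝ) (hK : K = R * A * P)
    (δP : Matrix F C ℝ) (hδP : δP = Aff * W + Afc)
    (δR : Matrix C F ℝ) (hδR : δR = Z * Aff + Acf)
    (CR : ℝ)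
    (hWAP : ∀ v : (F ⊕ C) → ℝ, ∃ wc : C → ℝ,
      euclNorm (v - Rᵀ *ᵥ wc) ^ 2 ≤ (CR / ‖A * Aᵀ‖) * euclNorm (Aᵀ *ᵥ v) ^ 2)
    (CZ : ℝ) (hCZ : CZ = Real.sqrt (CR * (1 + ‖Z‖ ^ 2) / ‖A * Aᵀ‖))
    (hsmall : CZ * ‖δP‖ < 1) :
    ∀ ΔF : Matrix F F ℝ, ∀ δF δFhat G Gpre : Matrix F F ℝ,
      δF = 1 - ΔF * Aff → δFhat = 1 - Aff * ΔF →
      G = δF + ΔF * δP * K⁻¹ * δR → Gpre = δFhat + δP * K⁻¹ * δR * ΔF →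
      ‖G‖ ≤ ‖δF‖ + ‖ΔF‖ * ‖Aff‖ * (CZ * ‖δP‖) / (1 - CZ * ‖δP‖) ∧
      ‖Gpre‖ ≤ ‖δFhat‖ + (1 + ‖δFhat‖) * (CZ * ‖δP‖) / (1 - CZ * ‖δP‖) := by
  intro ΔF δF δFhat G Gpre hδF hδFhat hG hGpre
  have hAffdet : IsUnit Aff.det := (Matrix.isUnit_iff_isUnit_det Aff).mp hAff
  have hIff : Aff⁻¹ * Aff = 1 := Matrix.nonsing_inv_mul Aff hAffdet
  have hffI : Aff * Aff⁻¹ = 1 := Matrix.mul_nonsing_inv Aff hAffdet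
  obtain ⟨S, hSdef⟩ : ∃ S : Matrix C C ℝ, S = Acc - Acf * Aff⁻¹ * Afc := ⟨_, rfl⟩
  have hSunit : IsUnit S := by
    have hdetA : IsUnit A.det := (Matrix.isUnit_iff_isUnit_det A).mp hAinv
    haveI : Invertible Aff := hAff.invertible
    rw [hA, Matrix.det_fromBlocks₁₁, Matrix.invOf_eq_nonsing_inv] at hdetA
    exact (Matrix.isUnit_iff_isUnit_det S).mpr (by rw [hSdef]; exact (IsUnit.mul_iff.mp hdetA).2)
  have hSdet : IsUnit S.det := (Matrix.isUnit_iff_isUnit_det S).mp hSunit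
  have hSS : S * S⁻¹ = 1 := Matrix.mul_nonsing_inv S hSdet
  have hSSi : S⁻¹ * S = 1 := Matrix.nonsing_inv_mul S hSdet
  obtain ⟨T, hTdef⟩ : ∃ T : Matrix C F ℝ, T = S⁻¹ * (δR * Aff⁻¹) := ⟨_, rfl⟩
  have hCZ0 : 0 ≤ CZ := hCZ ▸ Real.sqrt_nonneg _
  have hr0 : 0 ≤ CZ * ‖δP‖ := mul_nonneg hCZ0 (norm_nonneg _)
  have hr1 : (0:ℝ) < 1 - CZ * ‖δP‖ := by linarith
  -- WAP implies ‖T‖ ≤ CZ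
  have hT : ‖T‖ ≤ CZ := by
    rw [← WAPAux.l2_opNorm_transpose T]
    refine WAPAux.l2_opNorm_le_of_mulVec hCZ0 fun x => ?_
    rw [Matrix.mulVec_transpose]
    obtain ⟨y, hy⟩ : ∃ y : C → ℝ, y = x ᵥ* S⁻¹ := ⟨_, rfl⟩
    have hSy : y ᵥ* S = x := by
      rw [hy, Matrix.vecMul_vecMul, hSSi, Matrix.vecMul_one]
    obtain ⟨a, ha⟩ : ∃ a : F → ℝ, a = -((y ᵥ* Acf) ᵥ* Aff⁻¹) := ⟨_, rfl⟩
    obtain ⟨v, hv⟩ : ∃ v : (F ⊕ C) → ℝ, v = Sum.elim a y := ⟨_, rfl⟩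
    have hF : a ᵥ* Aff + y ᵥ* Acf = 0 := by
      rw [ha, Matrix.neg_vecMul, Matrix.vecMul_vecMul, hIff, Matrix.vecMul_one]
      exact neg_add_cancel _
    have hCc : a ᵥ* Afc + y ᵥ* Acc = x := by
      rw [ha, Matrix.neg_vecMul, Matrix.vecMul_vecMul, Matrix.vecMul_vecMul,
        ← Matrix.mul_assoc, ← hSy, hSdef, Matrix.vecMul_sub]
      abel
    have hAv : Aᵀ *ᵥ v = Sum.elim (0 : F → ℝ) x := by
      rw [Matrix.mulVec_transpose, hA, hv, Matrix.vecMul_fromBlocks,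
        Sum.elim_comp_inl, Sum.elim_comp_inr, hF, hCc]
    obtain ⟨wc, hwc⟩ := hWAP v
    rw [hAv] at hwc
    have hRwc : Rᵀ *ᵥ wc = Sum.elim (wc ᵥ* Z) wc := by
      rw [Matrix.mulVec_transpose, hR, Matrix.vecMul_fromCols, Matrix.vecMul_one]
    have he : v - Rᵀ *ᵥ wc = Sum.elim (a - wc ᵥ* Z) (y - wc) := by
      rw [hRwc, hv]; funext i; cases i <;> simp
    have hesq : euclNorm (a - wc ᵥ* Z) ^ 2 + euclNorm (y - wc) ^ 2
        ≤ (CR / ‖A * Aᵀ‖) * euclNorm x ^ 2 := by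
      have h0 : euclNorm (Sum.elim (0 : F → ℝ) x) ^ 2 = euclNorm x ^ 2 := by
        rw [WAPAux.euclNorm_sum_elim]
        simp [WAPAux.euclNorm_sq]
      rw [he, WAPAux.euclNorm_sum_elim, h0] at hwc
      exact hwc
    have hZAff : y ᵥ* (Z * Aff) ᵥ* Aff⁻¹ = y ᵥ* Z := by
      rw [Matrix.vecMul_vecMul, Matrix.mul_assoc, hffI, Matrix.mul_one]
    have hL : x ᵥ* T = y ᵥ* Z - a := by
      rw [hTdef, ← Matrix.vecMul_vecMul, ← hy, ← Matrix.vecMul_vecMul, hδR,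
        Matrix.vecMul_add, Matrix.add_vecMul, hZAff, ha]
      abel
    have hTx : x ᵥ* T = Zᵀ *ᵥ (y - wc) - (a - wc ᵥ* Z) := by
      rw [hL, Matrix.mulVec_transpose, Matrix.sub_vecMul]
      abel
    obtain ⟨u, hu⟩ : ∃ u, euclNorm (y - wc) = u := ⟨_, rfl⟩
    obtain ⟨w, hw⟩ : ∃ w, euclNorm (a - wc ᵥ* Z) = w := ⟨_, rfl⟩
    obtain ⟨n, hn⟩ : ∃ n, euclNorm x = n := ⟨_, rfl⟩
    have hu0 : 0 ≤ u := hu ▸ WAPAux.euclNorm_nonneg _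
    have hw0 : 0 ≤ w := hw ▸ WAPAux.euclNorm_nonneg _
    have hn0 : 0 ≤ n := hn ▸ WAPAux.euclNorm_nonneg _
    rw [hu, hw, hn] at hesq
    have step1 : euclNorm (x ᵥ* T) ≤ ‖Z‖ * u + w := by
      rw [hTx]
      calc euclNorm (Zᵀ *ᵥ (y - wc) - (a - wc ᵥ* Z))
          ≤ euclNorm (Zᵀ *ᵥ (y - wc)) + euclNorm (a - wc ᵥ* Z) :=
            WAPAux.euclNorm_sub_le _ _
        _ ≤ ‖Zᵀ‖ * u + w := by
            rw [← hu, ← hw]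
            exact add_le_add (WAPAux.euclNorm_mulVec_le _ _) le_rfl
        _ = ‖Z‖ * u + w := by rw [WAPAux.l2_opNorm_transpose]
    have step2 : (‖Z‖ * u + w) ^ 2 ≤ (1 + ‖Z‖ ^ 2) * (w ^ 2 + u ^ 2) := by
      nlinarith [sq_nonneg (‖Z‖ * w - u), sq_nonneg (‖Z‖ * u - w), sq_nonneg u, sq_nonneg w]
    have hZuw : (0:ℝ) ≤ ‖Z‖ * u + w := add_nonneg (mul_nonneg (norm_nonneg _) hu0) hw0
    rw [hn]
    calc euclNorm (x ᵥ* T) ≤ ‖Z‖ * u + w := step1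
      _ = Real.sqrt ((‖Z‖ * u + w) ^ 2) := (Real.sqrt_sq hZuw).symm
      _ ≤ Real.sqrt (CR * (1 + ‖Z‖ ^ 2) / ‖A * Aᵀ‖ * n ^ 2) := by
          apply Real.sqrt_le_sqrt
          calc (‖Z‖ * u + w) ^ 2 ≤ (1 + ‖Z‖ ^ 2) * (w ^ 2 + u ^ 2) := step2
            _ ≤ (1 + ‖Z‖ ^ 2) * ((CR / ‖A * Aᵀ‖) * n ^ 2) := by
                apply mul_le_mul_of_nonneg_left hesq (by positivity)
            _ = CR * (1 + ‖Z‖ ^ 2) / ‖A * Aᵀ‖ * n ^ 2 := by ring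
      _ = CZ * n := by
          rw [Real.sqrt_mul' _ (sq_nonneg n), hCZ, Real.sqrt_sq hn0]
  -- K = S * (1 + T * δP)
  have hA1 : Aff⁻¹ * δP = W + Aff⁻¹ * Afc := by
    rw [hδP, Matrix.mul_add, ← Matrix.mul_assoc, hIff, Matrix.one_mul]
  have hKexp : K = S + δR * (Aff⁻¹ * δP) := by
    have h1 : δR * (Aff⁻¹ * δP) = Z * Aff * W + Z * Afc + Acf * W + Acf * Aff⁻¹ * Afc := by
      rw [hA1, hδR, Matrix.add_mul, Matrix.mul_add, Matrix.mul_add]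
      rw [show Z * Aff * (Aff⁻¹ * Afc) = Z * Afc by
        rw [Matrix.mul_assoc Z, ← Matrix.mul_assoc Aff, hffI, Matrix.one_mul]]
      rw [← Matrix.mul_assoc Acf]
      abel
    have h2 : K = Z * (Aff * W + Afc) + (Acf * W + Acc) := by
      rw [hK, hA, hP, hR, Matrix.mul_assoc, Matrix.fromBlocks_mul_fromRows, Matrix.mul_one,
        Matrix.mul_one, Matrix.fromCols_mul_fromRows, Matrix.one_mul]
    rw [h2, h1, hSdef, Matrix.mul_add]
    rw [show Z * (Aff * W) = Z * Aff * W from (Matrix.mul_assoc _ _ _).symm]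
    abel
  have hKU : K = S * (1 + T * δP) := by
    rw [Matrix.mul_add, Matrix.mul_one, hTdef, ← Matrix.mul_assoc S, ← Matrix.mul_assoc S, hSS,
      Matrix.one_mul, hKexp, Matrix.mul_assoc]
  have hE : ‖T * δP‖ < 1 := lt_of_le_of_lt
    (le_trans (Matrix.l2_opNorm_mul _ _) (mul_le_mul_of_nonneg_right hT (norm_nonneg _))) hsmall
  obtain ⟨hUnit, hUinv⟩ := WAPAux.one_add_inv_bound (T * δP) hE
  have hEbound : ‖(1 + T * δP)⁻¹‖ ≤ 1 / (1 - CZ * ‖δP‖) := by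
    refine le_trans hUinv ?_
    apply one_div_le_one_div_of_le hr1
    have := le_trans (Matrix.l2_opNorm_mul T δP) (mul_le_mul_of_nonneg_right hT (norm_nonneg _))
    linarith
  -- the key bounded matrix
  obtain ⟨M, hMdef⟩ : ∃ M : Matrix C F ℝ, M = K⁻¹ * (δR * Aff⁻¹) := ⟨_, rfl⟩
  have hMfact : M = (1 + T * δP)⁻¹ * T := by
    rw [hMdef, hKU, Matrix.mul_inv_rev, Matrix.mul_assoc, ← hTdef]
  have hM : ‖M‖ ≤ CZ / (1 - CZ * ‖δP‖) := by
    rw [hMfact]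
    calc ‖(1 + T * δP)⁻¹ * T‖ ≤ ‖(1 + T * δP)⁻¹‖ * ‖T‖ := Matrix.l2_opNorm_mul _ _
      _ ≤ (1 / (1 - CZ * ‖δP‖)) * CZ := by
          apply mul_le_mul hEbound hT (norm_nonneg _) (by positivity)
      _ = CZ / (1 - CZ * ‖δP‖) := by ring
  have hM0 : 0 ≤ ‖M‖ := norm_nonneg _
  constructor
  · -- G bound
    have hGsplit : G = δF + ΔF * δP * M * Aff := by
      rw [hG, hMdef]
      congr 1
      simp only [Matrix.mul_assoc]
      rw [hIff, Matrix.mul_one]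
    have hb : ‖ΔF * δP * M * Aff‖ ≤ ‖ΔF‖ * ‖δP‖ * ‖M‖ * ‖Aff‖ := by
      calc ‖ΔF * δP * M * Aff‖ ≤ ‖ΔF * δP * M‖ * ‖Aff‖ := Matrix.l2_opNorm_mul _ _
        _ ≤ ‖ΔF * δP‖ * ‖M‖ * ‖Aff‖ := by
            apply mul_le_mul_of_nonneg_right (Matrix.l2_opNorm_mul _ _) (norm_nonneg _)
        _ ≤ ‖ΔF‖ * ‖δP‖ * ‖M‖ * ‖Aff‖ := by
            apply mul_le_mul_of_nonneg_right
              (mul_le_mul_of_nonneg_right (Matrix.l2_opNorm_mul _ _) hM0) (norm_nonneg _)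
    have hfin : ‖ΔF‖ * ‖δP‖ * ‖M‖ * ‖Aff‖ ≤ ‖ΔF‖ * ‖Aff‖ * (CZ * ‖δP‖) / (1 - CZ * ‖δP‖) := by
      have h5 : ‖ΔF‖ * ‖δP‖ * ‖M‖ * ‖Aff‖ ≤ ‖ΔF‖ * ‖δP‖ * (CZ / (1 - CZ * ‖δP‖)) * ‖Aff‖ := by
        apply mul_le_mul_of_nonneg_right
          (mul_le_mul_of_nonneg_left hM (by positivity)) (norm_nonneg _)
      calc ‖ΔF‖ * ‖δP‖ * ‖M‖ * ‖Aff‖ ≤ ‖ΔF‖ * ‖δP‖ * (CZ / (1 - CZ * ‖δP‖)) * ‖Aff‖ := h5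
        _ = ‖ΔF‖ * ‖Aff‖ * (CZ * ‖δP‖) / (1 - CZ * ‖δP‖) := by ring
    calc ‖G‖ ≤ ‖δF‖ + ‖ΔF * δP * M * Aff‖ := hGsplit ▸ norm_add_le _ _
      _ ≤ ‖δF‖ + ‖ΔF‖ * ‖Aff‖ * (CZ * ‖δP‖) / (1 - CZ * ‖δP‖) :=
          add_le_add le_rfl (le_trans hb hfin)
  · -- Gpre bound
    have hGsplit : Gpre = δFhat + δP * M * (1 - δFhat) := by
      rw [hGpre, hMdef]
      congr 1
      have h6 : (1 : Matrix F F ℝ) - δFhat = Aff * ΔF := by rw [hδFhat]; abel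
      rw [h6]
      simp only [Matrix.mul_assoc]
      rw [← Matrix.mul_assoc Aff⁻¹, hIff, Matrix.one_mul]
    have h1d : ‖(1 : Matrix F F ℝ) - δFhat‖ ≤ 1 + ‖δFhat‖ :=
      le_trans (norm_sub_le _ _) (add_le_add WAPAux.norm_one_le le_rfl)
    have hb : ‖δP * M * (1 - δFhat)‖ ≤ ‖δP‖ * ‖M‖ * (1 + ‖δFhat‖) := by
      calc ‖δP * M * (1 - δFhat)‖ ≤ ‖δP * M‖ * ‖(1 : Matrix F F ℝ) - δFhat‖ :=
            Matrix.l2_opNorm_mul _ _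
        _ ≤ ‖δP‖ * ‖M‖ * (1 + ‖δFhat‖) := by
            apply mul_le_mul (Matrix.l2_opNorm_mul _ _) h1d (norm_nonneg _)
              (mul_nonneg (norm_nonneg _) hM0)
    have hfin : ‖δP‖ * ‖M‖ * (1 + ‖δFhat‖) ≤ (1 + ‖δFhat‖) * (CZ * ‖δP‖) / (1 - CZ * ‖δP‖) := by
      have h5 : ‖δP‖ * ‖M‖ * (1 + ‖δFhat‖) ≤ ‖δP‖ * (CZ / (1 - CZ * ‖δP‖)) * (1 + ‖δFhat‖) := by
        apply mul_le_mul_of_nonneg_right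
          (mul_le_mul_of_nonneg_left hM (norm_nonneg _)) (by positivity)
      calc ‖δP‖ * ‖M‖ * (1 + ‖δFhat‖) ≤ ‖δP‖ * (CZ / (1 - CZ * ‖δP‖)) * (1 + ‖δFhat‖) := h5
        _ = (1 + ‖δFhat‖) * (CZ * ‖δP‖) / (1 - CZ * ‖δP‖) := by ring
    calc ‖Gpre‖ ≤ ‖δFhat‖ + ‖δP * M * (1 - δFhat)‖ := hGsplit ▸ norm_add_le _ _
      _ ≤ ‖δFhat‖ + (1 + ‖δFhat‖) * (CZ * ‖δP‖) / (1 - CZ * ‖δP‖) :=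
          add_le_add le_rfl (le_trans hb hfin)
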